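/- Let A be a |U|×|X| matrix with nonnegative entries, columns summing to 1, and no zero rows, with a_min as defined. Fix 2 ≤ n ≤ |U|, a positive ε_s satisfying the bound of the tolerance-recursion lemma, and ε' with a_min² ε_s/((a_min-ε_s) ã_{n-1}) < ε' < a_min, where ã_{n-1} = a_min²(1+(n-1)/a_min)^{-1}. Suppose the left null space of A contains no L1-normalized (a_min, ε')-double polarized 1×|U| vector. Then there exists ε > 0 such that: whenever the left null space of A contains an n×|U| matrix whose rows are L1-normalized and whose i-th row is (a_min, ε)-polarized at i for each i, no row of that matrix is ε_s-dependent upon the other rows. -/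

import Mathlib

set_option maxHeartbeats 4000000
set_option linter.unusedSectionVars false
set_option linter.unusedVariables false

open Finset

noncomputable def Amin {U X : ℕ} [NeZero U] (A : Matrix (Fin U) (Fin X) ℝ) : ℝ :=
  Finset.univ.inf' Finset.univ_nonempty (fun i => ∑ j, A i j)

noncomputable def amin {U X : ℕ} [NeZero U] (A : Matrix (Fin U) (Fin X) ℝ) : ℝ :=
  Amin A / (U * (X + Amin A))

section helpers

variable {U X : ℕ} [NeZero U] [NeZero X] (A : Matrix (Fin U) (Fin X) ℝ)

lemma Amin_le_rowsum (i : Fin U) : Amin A ≤ ∑ j, A i j :=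
  Finset.inf'_le _ (Finset.mem_univ i)

lemma Amin_pos (hA0 : ∀ i j, 0 ≤ A i j) (hrow : ∀ i, ∃ j, A i j ≠ 0) : 0 < Amin A := by
  rw [Amin, Finset.lt_inf'_iff]
  intro i _
  obtain ⟨j, hj⟩ := hrow i
  have hj' : 0 < A i j := lt_of_le_of_ne (hA0 i j) (Ne.symm hj)
  exact Finset.sum_pos' (fun k _ => hA0 i k) ⟨j, Finset.mem_univ j, hj'⟩

lemma entry_le_one (hA0 : ∀ i j, 0 ≤ A i j) (hcol : ∀ j, ∑ i, A i j = 1)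
    (i : Fin U) (j : Fin X) : A i j ≤ 1 := by
  calc A i j ≤ ∑ k, A k j :=
        Finset.single_le_sum (fun k _ => hA0 k j) (Finset.mem_univ i)
    _ = 1 := hcol j

lemma rowsum_le_X (hA0 : ∀ i j, 0 ≤ A i j) (hcol : ∀ j, ∑ i, A i j = 1) (i : Fin U) :
    ∑ j, A i j ≤ X := by
  calc ∑ j, A i j ≤ ∑ _j : Fin X, (1:ℝ) :=
        Finset.sum_le_sum (fun j _ => entry_le_one A hA0 hcol i j)
    _ = X := by simp

lemma UAmin_le_X (hA0 : ∀ i j, 0 ≤ A i j) (hcol : ∀ j, ∑ i, A i j = 1) :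
    (U : ℝ) * Amin A ≤ X := by
  have h1 : (U : ℝ) * Amin A ≤ ∑ i : Fin U, ∑ j, A i j := by
    calc (U : ℝ) * Amin A = ∑ _i : Fin U, Amin A := by simp [mul_comm]
      _ ≤ ∑ i : Fin U, ∑ j, A i j := Finset.sum_le_sum (fun i _ => Amin_le_rowsum A i)
  have h2 : ∑ i : Fin U, ∑ j, A i j = X := by
    refine Finset.sum_comm.trans ?_
    simp [hcol]
  linarith

lemma Ua_eq (hA0 : ∀ i j, 0 ≤ A i j) (hrow : ∀ i, ∃ j, A i j ≠ 0) :
    (U : ℝ) * amin A = Amin A / (X + Amin A) := by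
  have hU : (U : ℝ) ≠ 0 := Nat.cast_ne_zero.mpr (NeZero.ne U)
  have hX : (0:ℝ) < X := by
    have := NeZero.pos X
    exact_mod_cast this
  have hAm := Amin_pos A hA0 hrow
  rw [amin]
  field_simp

lemma amin_pos (hA0 : ∀ i j, 0 ≤ A i j) (hrow : ∀ i, ∃ j, A i j ≠ 0) : 0 < amin A := by
  have hAm := Amin_pos A hA0 hrow
  have hX : (0:ℝ) < X := by exact_mod_cast NeZero.pos X
  have hU : (0:ℝ) < U := by exact_mod_cast NeZero.pos U
  apply div_pos hAm
  positivity

lemma Ua_le_half (hA0 : ∀ i j, 0 ≤ A i j) (hcol : ∀ j, ∑ i, A i j = 1)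
    (hrow : ∀ i, ∃ j, A i j ≠ 0) : (U : ℝ) * amin A ≤ 1/2 := by
  rw [Ua_eq A hA0 hrow]
  have hAm := Amin_pos A hA0 hrow
  have hX : (0:ℝ) < X := by exact_mod_cast NeZero.pos X
  have hU : (1:ℝ) ≤ U := by exact_mod_cast NeZero.one_le
  have hle : Amin A ≤ X := by
    have := UAmin_le_X A hA0 hcol
    nlinarith
  rw [div_le_iff₀ (by linarith)]
  linarith

/-- Mass lemma: positive part of any vector in the left null space of `A`
is at least `U * amin A` times its L1 norm. -/
lemma mass_lemma (hA0 : ∀ i j, 0 ≤ A i j) (hcol : ∀ j, ∑ i, A i j = 1)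
    (hrow : ∀ i, ∃ j, A i j ≠ 0) (ω : Fin U → ℝ)
    (hω : ∀ l, ∑ u, ω u * A u l = 0) :
    (U : ℝ) * amin A * (∑ u, |ω u|) ≤ ∑ u, max (ω u) 0 := by
  have hAm := Amin_pos A hA0 hrow
  have hX : (0:ℝ) < X := by exact_mod_cast NeZero.pos X
  -- the weighted balance
  have hbal : ∑ u, ω u * (∑ l, A u l) = 0 := by
    have : ∑ u, ω u * (∑ l, A u l) = ∑ l, ∑ u, ω u * A u l := by
      rw [Finset.sum_comm]
      congr 1; ext u
      rw [Finset.mul_sum]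
    rw [this]
    simp [hω]
  -- split
  have hsplit : ∀ r : ℝ, r = max r 0 - max (-r) 0 := by
    intro r
    rcases le_total r 0 with h | h
    · rw [max_eq_right h, max_eq_left (by linarith)]; ring
    · rw [max_eq_left h, max_eq_right (by linarith)]; ring
  set P := ∑ u, max (ω u) 0 with hP
  set N := ∑ u, max (-ω u) 0 with hN
  have habs : ∑ u, |ω u| = P + N := by
    rw [hP, hN, ← Finset.sum_add_distrib]
    congr 1; ext u
    rcases le_total (ω u) 0 with h | h
    · rw [abs_of_nonpos h, max_eq_right h, max_eq_left (by linarith)]; ring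
    · rw [abs_of_nonneg h, max_eq_left h, max_eq_right (by linarith)]; ring
  have hkey : Amin A * N ≤ (X : ℝ) * P := by
    have h1 : ∑ u, max (-ω u) 0 * (∑ l, A u l) = ∑ u, max (ω u) 0 * (∑ l, A u l) := by
      have hptw : ∀ u, max (-ω u) 0 * (∑ l, A u l)
          = max (ω u) 0 * (∑ l, A u l) - ω u * (∑ l, A u l) := by
        intro u
        linear_combination (∑ l, A u l) * (hsplit (ω u))
      calc ∑ u, max (-ω u) 0 * (∑ l, A u l)
          = ∑ u, (max (ω u) 0 * (∑ l, A u l) - ω u * (∑ l, A u l)) := by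
            exact Finset.sum_congr rfl (fun u _ => hptw u)
        _ = ∑ u, max (ω u) 0 * (∑ l, A u l) - ∑ u, ω u * (∑ l, A u l) :=
            Finset.sum_sub_distrib _ _
        _ = ∑ u, max (ω u) 0 * (∑ l, A u l) := by rw [hbal]; ring
    have h2 : Amin A * N ≤ ∑ u, max (-ω u) 0 * (∑ l, A u l) := by
      rw [hN, Finset.mul_sum]
      apply Finset.sum_le_sum
      intro u _
      rw [mul_comm]
      apply mul_le_mul_of_nonneg_left (Amin_le_rowsum A u) (le_max_right _ _)
    have h3 : ∑ u, max (ω u) 0 * (∑ l, A u l) ≤ (X:ℝ) * P := by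
      rw [hP, Finset.mul_sum]
      apply Finset.sum_le_sum
      intro u _
      rw [mul_comm ((X:ℝ)) _]
      exact mul_le_mul_of_nonneg_left (rowsum_le_X A hA0 hcol u) (le_max_right _ _)
    linarith
  have hUa := Ua_eq A hA0 hrow
  rw [hUa, habs]
  rw [div_mul_eq_mul_div, div_le_iff₀ (by linarith)]
  have hPnn : 0 ≤ P := Finset.sum_nonneg (fun u _ => le_max_right _ _)
  nlinarith

end helpers

theorem stmt_6 {U X : ℕ} [NeZero U] [NeZero X]
    (A : Matrix (Fin U) (Fin X) ℝ)
    (hA0 : ∀ i j, 0 ≤ A i j)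
    (hcol : ∀ j, ∑ i, A i j = 1)
    (hrow : ∀ i, ∃ j, A i j ≠ 0)
    (n : ℕ) (hn2 : 2 ≤ n) (hnU : n ≤ U)
    (ta : ℝ) (hta : ta = amin A ^ 2 * (1 + ((n : ℝ) - 1) / amin A)⁻¹)
    (εs : ℝ) (hεs0 : 0 < εs)
    (hεsbound : εs < amin A ^ 2 * ta *
      (amin A ^ 2 * (1 + (amin A * ta / 2) ^ (n - 1)) +
        ((n : ℝ) - 1) * (1 + amin A) * ta ^ 2 / 2 + amin A * ta)⁻¹)
    (ε' : ℝ)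
    (hε'lb : amin A ^ 2 * εs / ((amin A - εs) * ta) < ε') (hε'ub : ε' < amin A)
    -- the left null space of `A` contains no L1-normalized
    -- `(a_min, ε')`-double polarized vector
    (hnodbl : ¬ ∃ (ω : Fin U → ℝ) (j k : Fin U), j ≠ k ∧
      (∑ i, |ω i| = 1) ∧ (∀ l, ∑ i, ω i * A i l = 0) ∧
      amin A ≤ ω j ∧ ω k ≤ -(amin A) ∧ ∀ i, i ≠ j → i ≠ k → |ω i| ≤ ε') :
    ∃ ε : ℝ, 0 < ε ∧
      ∀ Υ : Fin n → Fin U → ℝ,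
        (∀ i, ∑ j, |Υ i j| = 1) →
        (∀ i l, ∑ k, Υ i k * A k l = 0) →
        (∀ i : Fin n, amin A ≤ Υ i ⟨(i : ℕ), by have := i.isLt; omega⟩) →
        (∀ (i : Fin n) (j : Fin U), (j : ℕ) ≠ (i : ℕ) → Υ i j ≤ ε) →
        ∀ i : Fin n, ¬ ∃ c : Fin n → ℝ,
          ∑ j, |Υ i j - ∑ k ∈ Finset.univ.erase i, c k * Υ k j| ≤ εs := by
  classical
  have ha : 0 < amin A := amin_pos A hA0 hrow
  have hU0 : (0:ℝ) < U := by exact_mod_cast NeZero.pos U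
  have hn0 : (0:ℝ) < n := by
    have : 0 < n := lt_of_lt_of_le (by norm_num) hn2
    exact_mod_cast this
  have hU2 : (2:ℝ) ≤ (U:ℝ) := by exact_mod_cast le_trans hn2 hnU
  have hn2' : (2:ℝ) ≤ (n:ℝ) := by exact_mod_cast hn2
  have hnU' : (n:ℝ) ≤ (U:ℝ) := by exact_mod_cast hnU
  have hn1 : (1:ℝ) ≤ (n:ℝ) - 1 := by linarith
  -- abbreviation
  set a : ℝ := amin A with ha_def
  set β : ℝ := (U:ℝ) * a with hβ_def
  have hβpos : 0 < β := by positivity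
  have hβhalf : β ≤ 1/2 := Ua_le_half A hA0 hcol hrow
  have hβ2a : 2*a ≤ β := by nlinarith
  have ha4 : a ≤ 1/4 := by nlinarith
  clear_value a β
  -- ε_s is below the first tolerance
  have htapos : 0 < ta := by
    rw [hta]
    have h1 : 0 < 1 + ((n : ℝ) - 1) / a := by positivity
    positivity
  have hta3 : ta * (a + (n:ℝ) - 1) = a^3 := by
    rw [hta]
    have h2 : a ≠ 0 := ne_of_gt ha
    field_simp
    ring
  have hεsta : εs < ta := by
    have hg : (0:ℝ) ≤ (a * ta / 2) ^ (n - 1) := by positivity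
    have hq : (0:ℝ) ≤ (n:ℝ) - 1 := by linarith
    have hterm2 : (0:ℝ) ≤ ((n : ℝ) - 1) * (1 + a) * ta ^ 2 / 2 := by positivity
    have hterm1 : a^2 ≤ a ^ 2 * (1 + (a * ta / 2) ^ (n - 1)) := by
      have h1 : (1:ℝ) ≤ 1 + (a * ta / 2) ^ (n - 1) := by linarith
      nlinarith [sq_nonneg a]
    have hterm3 : (0:ℝ) < a * ta := mul_pos ha htapos
    have hden2 : a^2 ≤ a ^ 2 * (1 + (a * ta / 2) ^ (n - 1)) +
        ((n : ℝ) - 1) * (1 + a) * ta ^ 2 / 2 + a * ta := by linarith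
    have hden : 0 < a ^ 2 * (1 + (a * ta / 2) ^ (n - 1)) +
        ((n : ℝ) - 1) * (1 + a) * ta ^ 2 / 2 + a * ta := by
      have := pow_pos ha 2
      linarith
    calc εs < a ^ 2 * ta * (a ^ 2 * (1 + (a * ta / 2) ^ (n - 1)) +
        ((n : ℝ) - 1) * (1 + a) * ta ^ 2 / 2 + a * ta)⁻¹ := hεsbound
      _ ≤ ta := by
          rw [mul_inv_le_iff₀ hden]
          calc a ^ 2 * ta = ta * a^2 := by ring
            _ ≤ ta * (a ^ 2 * (1 + (a * ta / 2) ^ (n - 1)) +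
                ((n : ℝ) - 1) * (1 + a) * ta ^ 2 / 2 + a * ta) :=
                mul_le_mul_of_nonneg_left hden2 (le_of_lt htapos)
  have hεs3 : εs * ((n:ℝ) - 1) ≤ a^3 := by
    have h1 : εs * (a + (n:ℝ) - 1) ≤ ta * (a + (n:ℝ) - 1) := by
      apply mul_le_mul_of_nonneg_right (le_of_lt hεsta)
      linarith
    rw [hta3] at h1
    nlinarith
  have hεsa3 : εs ≤ a^3 := by nlinarith
  have hεslta : εs < a := by nlinarith
  -- the usable form of the ε' lower bound
  have hε'pos : 0 < ε' := by
    have h1 : 0 < a ^ 2 * εs / ((a - εs) * ta) := by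
      have : 0 < a - εs := by linarith
      positivity
    linarith
  have hε'a : εs * (a + (n:ℝ) - 1) ≤ ε' * (a*a) := by
    have haεs : 0 < a - εs := by linarith
    have h1 : a ^ 2 * εs < ε' * ((a - εs) * ta) := by
      rw [div_lt_iff₀ (by positivity)] at hε'lb
      linarith
    have h2 : ε' * ((a - εs) * ta) ≤ ε' * (a * ta) := by
      apply mul_le_mul_of_nonneg_left _ (le_of_lt hε'pos)
      nlinarith
    have h3 : a ^ 2 * εs * (a + (n:ℝ) - 1) ≤ ε' * (a * ta) * (a + (n:ℝ) - 1) := by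
      have := le_trans (le_of_lt h1) h2
      apply mul_le_mul_of_nonneg_right this
      linarith
    have h4 : ε' * (a * ta) * (a + (n:ℝ) - 1) = ε' * a * a^3 := by
      rw [show ε' * (a * ta) * (a + (n:ℝ) - 1) = ε' * a * (ta * (a + (n:ℝ) - 1)) by ring,
        hta3]
    rw [h4] at h3
    -- a^2 εs (a+n-1) ≤ ε' a^4  ⇒ divide by a^2
    nlinarith
  -- choose ε
  have hεpos : 0 < εs * a / (64 * (U:ℝ) * (n:ℝ)) := by positivity
  refine ⟨εs * a / (64 * (U:ℝ) * (n:ℝ)), hεpos, ?_⟩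
  intro Υ hnorm hnull hdiag hoff i₀ hdep
  obtain ⟨c, hc⟩ := hdep
  set ε : ℝ := εs * a / (64 * (U:ℝ) * (n:ℝ)) with hε_def
  have hε0 : 0 ≤ ε := le_of_lt hεpos
  -- embedding of row indices as coordinates
  set emb : Fin n → Fin U := fun k => (⟨(k:ℕ), lt_of_lt_of_le k.isLt hnU⟩ : Fin U)
    with hemb_def
  have hembval : ∀ k, ((emb k : Fin U) : ℕ) = (k:ℕ) := fun k => rfl
  have hdiag' : ∀ k, a ≤ Υ k (emb k) := fun k => hdiag k
  clear_value emb
  have hoff' : ∀ (k m : Fin n), k ≠ m → Υ k (emb m) ≤ ε := by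
    intro k m hkm
    apply hoff
    rw [hembval]
    exact fun h => hkm (Fin.ext h).symm
  -- Step 1: the relation with coefficients d, normalized to e with max ≤ 1
  set d : Fin n → ℝ := fun k => if k = i₀ then 1 else -(c k) with hd_def
  have hd_i₀ : d i₀ = 1 := by rw [hd_def]; simp
  have hdsum : ∀ j, ∑ k, d k * Υ k j
      = Υ i₀ j - ∑ k ∈ Finset.univ.erase i₀, c k * Υ k j := by
    intro j
    have h1 : ∑ k ∈ Finset.univ.erase i₀, d k * Υ k j
        = ∑ k ∈ Finset.univ.erase i₀, -(c k * Υ k j) := by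
      apply Finset.sum_congr rfl
      intro k hk
      have hki₀ : k ≠ i₀ := (Finset.mem_erase.mp hk).1
      rw [hd_def]
      simp [hki₀]
    calc ∑ k, d k * Υ k j
        = (∑ k ∈ Finset.univ.erase i₀, d k * Υ k j) + d i₀ * Υ i₀ j :=
          (Finset.sum_erase_add _ _ (Finset.mem_univ _)).symm
      _ = Υ i₀ j - ∑ k ∈ Finset.univ.erase i₀, c k * Υ k j := by
          rw [h1, hd_i₀, Finset.sum_neg_distrib]; ring
  obtain ⟨j₀, -, hj₀max⟩ :=
    Finset.exists_max_image (Finset.univ : Finset (Fin n)) (fun k => |d k|)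
      ⟨i₀, Finset.mem_univ i₀⟩
  have hdj₀1 : 1 ≤ |d j₀| := by
    have := hj₀max i₀ (Finset.mem_univ i₀)
    rwa [hd_i₀, abs_one] at this
  have hdj₀ne : d j₀ ≠ 0 := by
    intro h
    rw [h, abs_zero] at hdj₀1
    linarith
  set e : Fin n → ℝ := fun k => d k / d j₀ with he_def
  have he_j₀ : e j₀ = 1 := by simp only [he_def]; exact div_self hdj₀ne
  have he_abs : ∀ k, |e k| ≤ 1 := by
    intro k
    simp only [he_def]
    rw [abs_div]
    rw [div_le_one (by positivity)]
    exact le_trans (hj₀max k (Finset.mem_univ k)) (le_refl _)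
  set δ : Fin U → ℝ := fun j => (∑ k, d k * Υ k j) / d j₀ with hδ_def
  have hδrel : ∀ j, ∑ k, e k * Υ k j = δ j := by
    intro j
    simp only [hδ_def, he_def]
    rw [Finset.sum_div]
    apply Finset.sum_congr rfl
    intro k _
    ring
  have hδ1 : ∑ j, |δ j| ≤ εs := by
    have h1 : ∀ j, |δ j| ≤ |(∑ k, d k * Υ k j)| := by
      intro j
      simp only [hδ_def]
      rw [abs_div]
      apply div_le_self (abs_nonneg _) hdj₀1
    calc ∑ j, |δ j| ≤ ∑ j, |(∑ k, d k * Υ k j)| :=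
          Finset.sum_le_sum (fun j _ => h1 j)
      _ = ∑ j, |Υ i₀ j - ∑ k ∈ Finset.univ.erase i₀, c k * Υ k j| := by
          apply Finset.sum_congr rfl
          intro j _
          rw [hdsum j]
      _ ≤ εs := hc
  clear_value d δ
  -- Step 2: sign split and elimination of negative coefficients
  set Sp : Finset (Fin n) := Finset.univ.filter (fun k => 0 < e k) with hSp_def
  set Sm : Finset (Fin n) := Finset.univ.filter (fun k => e k < 0) with hSm_def
  have hSpmem : ∀ k, k ∈ Sp ↔ 0 < e k := by
    intro k; rw [hSp_def]; simp
  have hSmmem : ∀ k, k ∈ Sm ↔ e k < 0 := by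
    intro k; rw [hSm_def]; simp
  have hj₀Sp : j₀ ∈ Sp := by rw [hSpmem, he_j₀]; norm_num
  have he_le1 : ∀ k, k ∈ Sp → e k ≤ 1 := by
    intro k _
    have := he_abs k
    exact le_trans (le_abs_self _) this
  have he_pos : ∀ k, k ∈ Sp → 0 < e k := fun k hk => (hSpmem k).mp hk
  have hSpcard : ((Sp.card : ℝ)) ≤ (n:ℝ) := by
    have : Sp.card ≤ n := by
      calc Sp.card ≤ (Finset.univ : Finset (Fin n)).card := Finset.card_filter_le _ _
        _ = n := by simp
    exact_mod_cast this
  set w : Fin U → ℝ := fun u => ∑ k ∈ Sp, e k * Υ k u with hw_def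
  set v : Fin U → ℝ := fun u => ∑ k ∈ Sm, -(e k) * Υ k u with hv_def
  have hwv : ∀ u, w u = δ u + v u := by
    intro u
    have hsplit := Finset.sum_filter_add_sum_filter_not (Finset.univ : Finset (Fin n))
      (fun k => 0 < e k) (fun k => e k * Υ k u)
    have h2 : ∑ k ∈ Finset.univ.filter (fun k => ¬ 0 < e k), e k * Υ k u
        = ∑ k ∈ Sm, e k * Υ k u := by
      symm
      apply Finset.sum_subset
      · intro k hk
        rw [hSmmem] at hk
        simp only [Finset.mem_filter, Finset.mem_univ, true_and]
        exact not_lt.mpr (le_of_lt hk)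
      · intro k hk hk2
        have h3 : ¬ 0 < e k := (Finset.mem_filter.mp hk).2
        have h4 : ¬ e k < 0 := fun h => hk2 ((hSmmem k).mpr h)
        have : e k = 0 := le_antisymm (not_lt.mp h3) (not_lt.mp h4)
        rw [this]; ring
    have h5 : v u = -∑ k ∈ Sm, e k * Υ k u := by
      simp only [hv_def]
      rw [← Finset.sum_neg_distrib]
      apply Finset.sum_congr rfl
      intro k _; ring
    have h6 := hδrel u
    rw [h2] at hsplit
    simp only [hw_def]
    simp only at hsplit h5 h6 ⊢
    linarith
  have hvle : ∀ u, v u ≤ (n:ℝ)*ε + |δ u| := by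
    intro u
    by_cases hu : ∃ m ∈ Sm, (u:ℕ) = (m:ℕ)
    · obtain ⟨m, hmSm, hum⟩ := hu
      have hwu : w u ≤ (n:ℝ)*ε := by
        simp only [hw_def]
        calc ∑ k ∈ Sp, e k * Υ k u ≤ ∑ _k ∈ Sp, ε := by
              apply Finset.sum_le_sum
              intro k hk
              have hkm : (u:ℕ) ≠ (k:ℕ) := by
                rw [hum]
                intro h
                have : m = k := Fin.ext h
                rw [this] at hmSm
                have := (hSmmem k).mp hmSm
                have := he_pos k hk
                linarith
              have hΥ : Υ k u ≤ ε := hoff k u hkm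
              calc e k * Υ k u ≤ e k * ε := by
                    apply mul_le_mul_of_nonneg_left hΥ (le_of_lt (he_pos k hk))
                _ ≤ 1 * ε := by
                    apply mul_le_mul_of_nonneg_right (he_le1 k hk) hε0
                _ = ε := one_mul ε
          _ = Sp.card * ε := by rw [Finset.sum_const, nsmul_eq_mul]
          _ ≤ (n:ℝ)*ε := by
              apply mul_le_mul_of_nonneg_right hSpcard hε0
      have := hwv u
      have habs : -|δ u| ≤ δ u := neg_abs_le _
      linarith
    · push_neg at hu
      simp only [hv_def]
      calc ∑ k ∈ Sm, -(e k) * Υ k u ≤ ∑ _k ∈ Sm, ε := by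
            apply Finset.sum_le_sum
            intro k hk
            have hke : e k < 0 := (hSmmem k).mp hk
            have hku : (u:ℕ) ≠ (k:ℕ) := hu k hk
            have hΥ : Υ k u ≤ ε := hoff k u hku
            have h1 : 0 < -(e k) := by linarith
            have h2 : -(e k) ≤ 1 := by
              have := he_abs k
              rw [abs_of_neg hke] at this
              linarith
            calc -(e k) * Υ k u ≤ -(e k) * ε :=
                  mul_le_mul_of_nonneg_left hΥ (le_of_lt h1)
              _ ≤ 1 * ε := mul_le_mul_of_nonneg_right h2 hε0
              _ = ε := one_mul ε
        _ = Sm.card * ε := by rw [Finset.sum_const, nsmul_eq_mul]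
        _ ≤ (n:ℝ)*ε := by
            apply mul_le_mul_of_nonneg_right _ hε0
            have : Sm.card ≤ n := by
              calc Sm.card ≤ (Finset.univ : Finset (Fin n)).card :=
                    Finset.card_filter_le _ _
                _ = n := by simp
            exact_mod_cast this
        _ ≤ (n:ℝ)*ε + |δ u| := by
            have := abs_nonneg (δ u)
            linarith
  -- generic null combination
  have hcomb_null : ∀ (s : Finset (Fin n)) (g : Fin n → ℝ) (l : Fin X),
      ∑ u, (∑ k ∈ s, g k * Υ k u) * A u l = 0 := by
    intro s g l
    calc ∑ u, (∑ k ∈ s, g k * Υ k u) * A u l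
        = ∑ u, ∑ k ∈ s, g k * Υ k u * A u l := by
          apply Finset.sum_congr rfl
          intro u _
          rw [Finset.sum_mul]
      _ = ∑ k ∈ s, ∑ u, g k * Υ k u * A u l := Finset.sum_comm
      _ = ∑ k ∈ s, g k * ∑ u, Υ k u * A u l := by
          apply Finset.sum_congr rfl
          intro k _
          rw [Finset.mul_sum]
          apply Finset.sum_congr rfl
          intro u _
          ring
      _ = 0 := by
          apply Finset.sum_eq_zero
          intro k _
          rw [hnull k l, mul_zero]
  have hv_null : ∀ l, ∑ u, v u * A u l = 0 := by
    intro l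
    simp only [hv_def]
    exact hcomb_null Sm (fun k => -(e k)) l
  set t₁ : ℝ := εs + ((U:ℝ)*((n:ℝ)*ε) + εs)/β with ht₁_def
  have hv1 : ∑ u, |v u| ≤ ((U:ℝ)*((n:ℝ)*ε) + εs)/β := by
    have hmass := mass_lemma A hA0 hcol hrow v hv_null
    rw [← ha_def, ← hβ_def] at hmass
    have hposm : ∑ u, max (v u) 0 ≤ (U:ℝ)*((n:ℝ)*ε) + εs := by
      calc ∑ u, max (v u) 0 ≤ ∑ u, ((n:ℝ)*ε + |δ u|) := by
            apply Finset.sum_le_sum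
            intro u _
            apply max_le (hvle u)
            have := abs_nonneg (δ u)
            positivity
        _ = (U:ℝ)*((n:ℝ)*ε) + ∑ u, |δ u| := by
            rw [Finset.sum_add_distrib, Finset.sum_const, nsmul_eq_mul]
            simp
        _ ≤ (U:ℝ)*((n:ℝ)*ε) + εs := by linarith
    rw [le_div_iff₀ hβpos]
    calc (∑ u, |v u|) * β = β * (∑ u, |v u|) := by ring
      _ ≤ ∑ u, max (v u) 0 := hmass
      _ ≤ (U:ℝ)*((n:ℝ)*ε) + εs := hposm
  have hw1 : ∑ u, |w u| ≤ t₁ := by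
    calc ∑ u, |w u| = ∑ u, |δ u + v u| := by
          apply Finset.sum_congr rfl
          intro u _
          rw [hwv u]
      _ ≤ ∑ u, (|δ u| + |v u|) :=
          Finset.sum_le_sum (fun u _ => abs_add_le _ _)
      _ = (∑ u, |δ u|) + (∑ u, |v u|) := Finset.sum_add_distrib
      _ ≤ t₁ := by rw [ht₁_def]; linarith [hδ1, hv1]
  have hclear1 : True := trivial
  have hwu : ∀ u, |w u| ≤ t₁ := by
    intro u
    calc |w u| ≤ ∑ u', |w u'| :=
          Finset.single_le_sum (f := fun u' => |w u'|) (fun u' _ => abs_nonneg _)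
            (Finset.mem_univ u)
      _ ≤ t₁ := hw1
    -- Step 3: flows and column balance
  have hnε0 : (0:ℝ) ≤ (n:ℝ)*ε := by positivity
  set x : Fin n → Fin U → ℝ := fun k u => max (-(Υ k u)) 0 with hx_def
  set p : Fin n → Fin U → ℝ := fun k u => max (Υ k u) 0 with hp_def
  have hxp : ∀ k u, Υ k u = p k u - x k u := by
    intro k u
    simp only [hp_def, hx_def]
    rcases le_total (Υ k u) 0 with h | h
    · rw [max_eq_right h, max_eq_left (by linarith)]; ring
    · rw [max_eq_left h, max_eq_right (by linarith)]; ring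
  have hx0 : ∀ k u, 0 ≤ x k u := by
    intro k u; simp only [hx_def]; exact le_max_right _ _
  have hp0 : ∀ k u, 0 ≤ p k u := by
    intro k u; simp only [hp_def]; exact le_max_right _ _
  have hpε : ∀ (k : Fin n) (u : Fin U), (u:ℕ) ≠ (k:ℕ) → p k u ≤ ε := by
    intro k u hku
    simp only [hp_def]
    exact max_le (hoff k u hku) hε0
  clear_value x p
  set D : Fin n → ℝ := fun m => e m * Υ m (emb m) with hD_def
  set wf : Fin n → Fin n → ℝ := fun k m => e k * x k (emb m) with hwf_def
  have hD_pos : ∀ m, m ∈ Sp → 0 < D m := by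
    intro m hm
    simp only [hD_def]
    exact mul_pos (he_pos m hm) (lt_of_lt_of_le ha (hdiag' m))
  have hwf0 : ∀ k m, k ∈ Sp → 0 ≤ wf k m := by
    intro k m hk
    simp only [hwf_def]
    exact mul_nonneg (le_of_lt (he_pos k hk)) (hx0 k (emb m))
  have hembne : ∀ (k m : Fin n), k ≠ m → ((emb m : Fin U):ℕ) ≠ (k:ℕ) := by
    intro k m hkm
    rw [hembval]
    intro h
    exact hkm (Fin.ext h).symm
  have hPt : ∀ m ∈ Sp, 0 ≤ ∑ k ∈ Sp.erase m, e k * p k (emb m) ∧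
      ∑ k ∈ Sp.erase m, e k * p k (emb m) ≤ (n:ℝ)*ε := by
    intro m hm
    constructor
    · apply Finset.sum_nonneg
      intro k hk
      exact mul_nonneg (le_of_lt (he_pos k (Finset.mem_of_mem_erase hk))) (hp0 _ _)
    · calc ∑ k ∈ Sp.erase m, e k * p k (emb m) ≤ ∑ _k ∈ Sp.erase m, ε := by
            apply Finset.sum_le_sum
            intro k hk
            have hkm : k ≠ m := (Finset.mem_erase.mp hk).1
            have hkSp : k ∈ Sp := Finset.mem_of_mem_erase hk
            calc e k * p k (emb m) ≤ 1 * p k (emb m) :=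
                  mul_le_mul_of_nonneg_right (he_le1 k hkSp) (hp0 _ _)
              _ = p k (emb m) := one_mul _
              _ ≤ ε := hpε k (emb m) (hembne k m hkm)
        _ = (Sp.erase m).card * ε := by rw [Finset.sum_const, nsmul_eq_mul]
        _ ≤ (n:ℝ)*ε := by
            apply mul_le_mul_of_nonneg_right _ hε0
            have h2 : (Sp.erase m).card ≤ n := by
              calc (Sp.erase m).card ≤ Sp.card :=
                    Finset.card_le_card (Finset.erase_subset _ _)
                _ ≤ (Finset.univ : Finset (Fin n)).card := Finset.card_filter_le _ _
                _ = n := by simp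
            exact_mod_cast h2
  have hcol_id : ∀ m ∈ Sp, w (emb m) = D m +
      (∑ k ∈ Sp.erase m, e k * p k (emb m)) - ∑ k ∈ Sp.erase m, wf k m := by
    intro m hm
    have h := Finset.sum_erase_add Sp (fun k => e k * Υ k (emb m)) hm
    have h2 : ∑ k ∈ Sp.erase m, e k * Υ k (emb m)
        = (∑ k ∈ Sp.erase m, e k * p k (emb m)) - ∑ k ∈ Sp.erase m, wf k m := by
      rw [← Finset.sum_sub_distrib]
      apply Finset.sum_congr rfl
      intro k _
      simp only [hwf_def]
      rw [hxp k (emb m)]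
      ring
    simp only [hw_def] at h ⊢
    rw [← h, h2]
    simp only [hD_def]
    ring
  have hcol_ub : ∀ m ∈ Sp, ∑ k ∈ Sp.erase m, wf k m ≤ D m + |w (emb m)| + (n:ℝ)*ε := by
    intro m hm
    have h := hcol_id m hm
    have h2 := (hPt m hm).2
    have h3 : -(|w (emb m)|) ≤ w (emb m) := neg_abs_le _
    linarith
  have hcol_lb : ∀ m ∈ Sp, D m ≤ ∑ k ∈ Sp.erase m, wf k m + |w (emb m)| + (n:ℝ)*ε := by
    intro m hm
    have h := hcol_id m hm
    have h2 := (hPt m hm).1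
    have h3 : w (emb m) ≤ |w (emb m)| := le_abs_self _
    linarith
  have hDj₀a : a ≤ D j₀ := by
    simp only [hD_def]
    rw [he_j₀, one_mul]
    exact hdiag' j₀
  clear_value D wf
  -- numeric smallness of t₁
  have hUne0 : (U:ℝ) ≠ 0 := ne_of_gt hU0
  have hnne0 : (n:ℝ) ≠ 0 := ne_of_gt hn0
  have hUnε : (U:ℝ)*((n:ℝ)*ε) = εs*a/64 := by
    simp only [hε_def]
    field_simp
  clear_value ε
  have ht₁β : t₁ * β = εs*β + εs*a/64 + εs := by
    have h1 : ((U:ℝ)*((n:ℝ)*ε) + εs)/β*β = (U:ℝ)*((n:ℝ)*ε) + εs :=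
      div_mul_cancel₀ _ (ne_of_gt hβpos)
    calc t₁ * β = εs * β + ((U:ℝ)*((n:ℝ)*ε) + εs)/β*β := by
          simp only [ht₁_def]; ring
      _ = εs * β + ((U:ℝ)*((n:ℝ)*ε) + εs) := by rw [h1]
      _ = εs*β + εs*a/64 + εs := by rw [hUnε]; ring
  clear_value t₁
  have hnε_small : (n:ℝ)*ε ≤ εs*a/128 := by
    have h1 : ((n:ℝ)*ε) * (U:ℝ) = εs*a/64 := by rw [mul_comm]; exact hUnε
    nlinarith [hU2, hnε0]
  have hUε_small : (U:ℝ)*ε ≤ εs*a/128 := by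
    have h1 : (U:ℝ)*ε*(n:ℝ) = εs*a/64 := by
      have h2 : (U:ℝ)*ε*(n:ℝ) = (U:ℝ)*((n:ℝ)*ε) := by ring
      rw [h2, hUnε]
    have h3 : (0:ℝ) ≤ (U:ℝ)*ε := mul_nonneg (le_of_lt hU0) hε0
    nlinarith [hn2']
  have ht₁small : t₁ + (n:ℝ)*ε < a := by
    have e1 : εs*β ≤ a^3*(1/2) :=
      mul_le_mul hεsa3 hβhalf (le_of_lt hβpos) (by positivity)
    have e2 : εs*a ≤ a^3 := by nlinarith only [hεsa3, ha, ha4, hεs0]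
    have e3 : ((n:ℝ)*ε)*β ≤ a^3/256 := by
      nlinarith only [hnε_small, hβhalf, hβpos, hnε0, e2]
    have e5 : 2*a^2 ≤ a*β := by nlinarith only [hβ2a, ha]
    have e6 : a^3 ≤ a^2*(1/4) := by nlinarith only [sq_nonneg a, ha, ha4]
    have e7 : 0 < a^2 := by positivity
    have h1 : (t₁ + (n:ℝ)*ε)*β < a*β := by
      have h2 : (t₁ + (n:ℝ)*ε)*β = t₁*β + ((n:ℝ)*ε)*β := by ring
      rw [h2, ht₁β]
      linarith only [e1, e2, e3, e5, e6, e7, hεsa3, hεs0]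
    exact lt_of_mul_lt_mul_right h1 (le_of_lt hβpos)
  -- the feeder q
  have hSp2 : (Sp.erase j₀).Nonempty := by
    by_contra hne
    rw [Finset.not_nonempty_iff_eq_empty] at hne
    have h0 : ∑ k ∈ Sp.erase j₀, wf k j₀ = 0 := by rw [hne]; exact Finset.sum_empty
    have h1 := hcol_lb j₀ hj₀Sp
    rw [h0] at h1
    have h2 := hwu (emb j₀)
    linarith [hDj₀a, ht₁small]
  obtain ⟨q, hqmem, hqmax⟩ :=
    Finset.exists_max_image (Sp.erase j₀) (fun k => wf k j₀) hSp2
  have hqSp : q ∈ Sp := Finset.mem_of_mem_erase hqmem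
  have hqj₀ : q ≠ j₀ := (Finset.mem_erase.mp hqmem).1
  have hwfq0 : 0 ≤ wf q j₀ := hwf0 q j₀ hqSp
  have hcard_er : ((Sp.erase j₀).card : ℝ) ≤ (n:ℝ) - 1 := by
    have h1 : (Sp.erase j₀).card ≤ n - 1 := by
      rw [Finset.card_erase_of_mem hj₀Sp]
      have h2 : Sp.card ≤ n := by
        calc Sp.card ≤ (Finset.univ : Finset (Fin n)).card := Finset.card_filter_le _ _
          _ = n := by simp
      omega
    have h2 : ((Sp.erase j₀).card : ℝ) ≤ ((n - 1 : ℕ) : ℝ) := by exact_mod_cast h1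
    have h3 : ((n - 1 : ℕ) : ℝ) = (n:ℝ) - 1 := by
      rw [Nat.cast_sub (by omega)]
      simp
    linarith
  have hq_sum : ∑ k ∈ Sp.erase j₀, wf k j₀ ≤ ((n:ℝ) - 1) * wf q j₀ := by
    calc ∑ k ∈ Sp.erase j₀, wf k j₀ ≤ ∑ _k ∈ Sp.erase j₀, wf q j₀ :=
          Finset.sum_le_sum (fun k hk => hqmax k hk)
      _ = (Sp.erase j₀).card * wf q j₀ := by rw [Finset.sum_const, nsmul_eq_mul]
      _ ≤ ((n:ℝ) - 1) * wf q j₀ := mul_le_mul_of_nonneg_right hcard_er hwfq0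
  have hq_big : D j₀ ≤ ((n:ℝ)-1) * wf q j₀ + |w (emb j₀)| + (n:ℝ)*ε := by
    have := hcol_lb j₀ hj₀Sp
    linarith [hq_sum]
    -- Step 4: the potential function via Knaster-Tarski
  set G : (Fin n → ℝ) → Fin n → ℝ := fun zp k =>
    if k = j₀ then 1 else if k = q then 0 else if k ∈ Sp then
      min 1 ((∑ k' ∈ Sp.erase k, zp k' * wf k' k) / D k) else 0 with hG_def
  have hGmono : ∀ zp zp', (∀ k, zp k ≤ zp' k) → ∀ k, G zp k ≤ G zp' k := by
    intro zp zp' hle k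
    simp only [hG_def]
    split_ifs with h1 h2 h3
    · exact le_refl 1
    · exact le_refl 0
    · apply min_le_min (le_refl 1)
      rw [div_eq_mul_inv, div_eq_mul_inv]
      apply mul_le_mul_of_nonneg_right _ (inv_nonneg.mpr (le_of_lt (hD_pos k h3)))
      apply Finset.sum_le_sum
      intro k' hk'
      exact mul_le_mul_of_nonneg_right (hle k')
        (hwf0 k' k (Finset.mem_of_mem_erase hk'))
    · exact le_refl 0
  have hGbox : ∀ zp, (∀ k, 0 ≤ zp k) → ∀ k, 0 ≤ G zp k ∧ G zp k ≤ 1 := by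
    intro zp h0 k
    simp only [hG_def]
    split_ifs with h1 h2 h3
    · norm_num
    · norm_num
    · constructor
      · apply le_min (by norm_num)
        apply div_nonneg _ (le_of_lt (hD_pos k h3))
        apply Finset.sum_nonneg
        intro k' hk'
        exact mul_nonneg (h0 k') (hwf0 k' k (Finset.mem_of_mem_erase hk'))
      · exact min_le_left _ _
    · norm_num
  set PF : Set (Fin n → ℝ) :=
    {zp | (∀ k, 0 ≤ zp k ∧ zp k ≤ 1) ∧ ∀ k, zp k ≤ G zp k} with hPF_def
  have hPFmem : ∀ zp, zp ∈ PF ↔ ((∀ k, 0 ≤ zp k ∧ zp k ≤ 1) ∧ ∀ k, zp k ≤ G zp k) := by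
    intro zp
    rw [hPF_def]
    exact Set.mem_setOf_eq ▸ Iff.rfl
  have hz0PF : (fun k => if k = j₀ then (1:ℝ) else 0) ∈ PF := by
    rw [hPFmem]
    have h0 : ∀ k', (0:ℝ) ≤ if k' = j₀ then (1:ℝ) else 0 := by
      intro k'; split_ifs <;> norm_num
    constructor
    · intro k
      constructor
      · exact h0 k
      · split_ifs <;> norm_num
    · intro k
      by_cases hk : k = j₀
      · subst hk
        simp [hG_def]
      · rw [if_neg hk]
        exact (hGbox _ h0 k).1
  set zf : Fin n → ℝ := fun k => sSup ((fun zp => zp k) '' PF) with hzf_def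
  have hbddk : ∀ k, BddAbove ((fun zp => zp k) '' PF) := by
    intro k
    refine ⟨1, ?_⟩
    rintro t ⟨zp, hzp, rfl⟩
    exact (((hPFmem zp).mp hzp).1 k).2
  have hnek : ∀ k, ((fun zp => zp k) '' PF).Nonempty :=
    fun k => ⟨_, _, hz0PF, rfl⟩
  have hz_ge : ∀ zp, zp ∈ PF → ∀ k, zp k ≤ zf k := by
    intro zp hzp k
    exact le_csSup (hbddk k) ⟨zp, hzp, rfl⟩
  have hzf1 : ∀ k, zf k ≤ 1 := by
    intro k
    apply csSup_le (hnek k)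
    rintro t ⟨zp, hzp, rfl⟩
    exact (((hPFmem zp).mp hzp).1 k).2
  have hzf0 : ∀ k, 0 ≤ zf k := by
    intro k
    have h1 := hz_ge _ hz0PF k
    have h2 : (0:ℝ) ≤ if k = j₀ then (1:ℝ) else 0 := by split_ifs <;> norm_num
    linarith
  have hzpost : ∀ k, zf k ≤ G zf k := by
    intro k
    apply csSup_le (hnek k)
    rintro t ⟨zp, hzp, rfl⟩
    obtain ⟨hb, hpost⟩ := (hPFmem zp).mp hzp
    exact le_trans (hpost k) (hGmono zp zf (fun k' => hz_ge zp hzp k') k)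
  have hGzfPF : G zf ∈ PF := by
    rw [hPFmem]
    exact ⟨fun k => hGbox zf hzf0 k, fun k => hGmono zf (G zf) hzpost k⟩
  have hzfix : ∀ k, G zf k = zf k :=
    fun k => le_antisymm (hz_ge (G zf) hGzfPF k) (hzpost k)
  have hzfj₀ : zf j₀ = 1 := by
    rw [← hzfix j₀]
    simp [hG_def]
  have hzfq : zf q = 0 := by
    rw [← hzfix q]
    simp [hG_def, hqj₀]
  have hz_ubD : ∀ m, m ∈ Sp → m ≠ j₀ → m ≠ q →
      zf m * D m ≤ ∑ k' ∈ Sp.erase m, zf k' * wf k' m := by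
    intro m hm hmj hmq
    have h1 : zf m = min 1 ((∑ k' ∈ Sp.erase m, zf k' * wf k' m) / D m) := by
      rw [← hzfix m]
      simp only [hG_def]
      rw [if_neg hmj, if_neg hmq, if_pos hm]
    have h2 : zf m ≤ (∑ k' ∈ Sp.erase m, zf k' * wf k' m) / D m := by
      rw [h1]; exact min_le_right _ _
    rw [le_div_iff₀ (hD_pos m hm)] at h2
    exact h2
  have hz_cases : ∀ m, m ∈ Sp → m ≠ j₀ → m ≠ q →
      zf m = 1 ∨ zf m * D m = ∑ k' ∈ Sp.erase m, zf k' * wf k' m := by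
    intro m hm hmj hmq
    have h1 : zf m = min 1 ((∑ k' ∈ Sp.erase m, zf k' * wf k' m) / D m) := by
      rw [← hzfix m]
      simp only [hG_def]
      rw [if_neg hmj, if_neg hmq, if_pos hm]
    rcases le_total 1 ((∑ k' ∈ Sp.erase m, zf k' * wf k' m) / D m) with h | h
    · left; rw [h1, min_eq_left h]
    · right
      rw [h1, min_eq_right h]
      exact div_mul_cancel₀ _ (ne_of_gt (hD_pos m hm))
  clear_value zf
  clear hzfix hGzfPF hzpost hz_ge hnek hbddk hz0PF hGbox hGmono hPFmem hPF_def hG_def hzf_def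
  clear PF G
  -- Step 5: the candidate double polarized vector
  set σ : Fin U → ℝ := fun u => ∑ k ∈ Sp, (zf k * e k) * Υ k u with hσ_def
  have hσnull : ∀ l, ∑ u, σ u * A u l = 0 := by
    intro l
    simp only [hσ_def]
    exact hcomb_null Sp (fun k => zf k * e k) l
  have hze0 : ∀ k, k ∈ Sp → 0 ≤ zf k * e k :=
    fun k hk => mul_nonneg (hzf0 k) (le_of_lt (he_pos k hk))
  have hze1 : ∀ k, k ∈ Sp → zf k * e k ≤ 1 := by
    intro k hk
    calc zf k * e k ≤ 1 * 1 :=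
          mul_le_mul (hzf1 k) (he_le1 k hk) (le_of_lt (he_pos k hk)) (by norm_num)
      _ = 1 := by norm_num
  clear_value σ
    -- bound on "inside" junk coordinates
  have hσ_b1 : ∀ m, m ∈ Sp → m ≠ j₀ → m ≠ q →
      |σ (emb m)| ≤ |w (emb m)| + 2*((n:ℝ)*ε) := by
    intro m hm hmj hmq
    have hdecomp : σ (emb m) = zf m * D m
        + (∑ k ∈ Sp.erase m, (zf k * e k) * p k (emb m))
        - ∑ k ∈ Sp.erase m, zf k * wf k m := by
      have h := Finset.sum_erase_add Sp (fun k => (zf k * e k) * Υ k (emb m)) hm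
      have h2 : ∑ k ∈ Sp.erase m, (zf k * e k) * Υ k (emb m)
          = (∑ k ∈ Sp.erase m, (zf k * e k) * p k (emb m))
            - ∑ k ∈ Sp.erase m, zf k * wf k m := by
        rw [← Finset.sum_sub_distrib]
        apply Finset.sum_congr rfl
        intro k _
        simp only [hwf_def]
        rw [hxp k (emb m)]
        ring
      simp only [hσ_def] at h ⊢
      rw [← h, h2]
      simp only [hD_def]
      ring
    have hP1 : 0 ≤ ∑ k ∈ Sp.erase m, (zf k * e k) * p k (emb m) := by
      apply Finset.sum_nonneg
      intro k hk
      exact mul_nonneg (hze0 k (Finset.mem_of_mem_erase hk)) (hp0 _ _)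
    have hP2 : ∑ k ∈ Sp.erase m, (zf k * e k) * p k (emb m) ≤ (n:ℝ)*ε := by
      calc ∑ k ∈ Sp.erase m, (zf k * e k) * p k (emb m) ≤ ∑ _k ∈ Sp.erase m, ε := by
            apply Finset.sum_le_sum
            intro k hk
            have hkm : k ≠ m := (Finset.mem_erase.mp hk).1
            have hkSp : k ∈ Sp := Finset.mem_of_mem_erase hk
            calc (zf k * e k) * p k (emb m) ≤ 1 * p k (emb m) :=
                  mul_le_mul_of_nonneg_right (hze1 k hkSp) (hp0 _ _)
              _ = p k (emb m) := one_mul _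
              _ ≤ ε := hpε k (emb m) (hembne k m hkm)
        _ = (Sp.erase m).card * ε := by rw [Finset.sum_const, nsmul_eq_mul]
        _ ≤ (n:ℝ)*ε := by
            apply mul_le_mul_of_nonneg_right _ hε0
            have h2 : (Sp.erase m).card ≤ n := by
              calc (Sp.erase m).card ≤ Sp.card :=
                    Finset.card_le_card (Finset.erase_subset _ _)
                _ ≤ (Finset.univ : Finset (Fin n)).card := Finset.card_filter_le _ _
                _ = n := by simp
            exact_mod_cast h2
    have hzwf_le : ∑ k ∈ Sp.erase m, zf k * wf k m ≤ ∑ k ∈ Sp.erase m, wf k m := by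
      apply Finset.sum_le_sum
      intro k hk
      have hkSp : k ∈ Sp := Finset.mem_of_mem_erase hk
      calc zf k * wf k m ≤ 1 * wf k m :=
            mul_le_mul_of_nonneg_right (hzf1 k) (hwf0 k m hkSp)
        _ = wf k m := one_mul _
    have hzwf_0 : 0 ≤ ∑ k ∈ Sp.erase m, zf k * wf k m := by
      apply Finset.sum_nonneg
      intro k hk
      exact mul_nonneg (hzf0 k) (hwf0 k m (Finset.mem_of_mem_erase hk))
    have hub := hz_ubD m hm hmj hmq
    have hcol := hcol_ub m hm
    have habs : 0 ≤ |w (emb m)| := abs_nonneg _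
    rw [abs_le]
    constructor
    · rcases hz_cases m hm hmj hmq with hcase | hcase
      · rw [hdecomp, hcase, one_mul]
        linarith only [hzwf_le, hP1, hcol, hnε0, habs]
      · rw [hdecomp, hcase]
        linarith only [hP1, habs, hnε0]
    · rw [hdecomp]
      linarith only [hub, hP2, habs, hnε0]
  -- bound on "outside" junk coordinates
  have hσ_b2 : ∀ u : Fin U, (∀ k, k ∈ Sp → (u:ℕ) ≠ (k:ℕ)) →
      |σ u| ≤ |w u| + 2*((n:ℝ)*ε) := by
    intro u hu
    have hup : σ u ≤ (n:ℝ)*ε := by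
      simp only [hσ_def]
      calc ∑ k ∈ Sp, (zf k * e k) * Υ k u ≤ ∑ _k ∈ Sp, ε := by
            apply Finset.sum_le_sum
            intro k hk
            calc (zf k * e k) * Υ k u ≤ (zf k * e k) * ε :=
                  mul_le_mul_of_nonneg_left (hoff k u (hu k hk)) (hze0 k hk)
              _ ≤ 1 * ε := mul_le_mul_of_nonneg_right (hze1 k hk) hε0
              _ = ε := one_mul ε
        _ = Sp.card * ε := by rw [Finset.sum_const, nsmul_eq_mul]
        _ ≤ (n:ℝ)*ε := mul_le_mul_of_nonneg_right hSpcard hε0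
    have hlow : -((n:ℝ)*ε + |w u|) ≤ σ u := by
      have hid : w u = (∑ k ∈ Sp, e k * p k u) - ∑ k ∈ Sp, e k * x k u := by
        simp only [hw_def]
        rw [← Finset.sum_sub_distrib]
        apply Finset.sum_congr rfl
        intro k _
        rw [hxp k u]
        ring
      have h2 : ∑ k ∈ Sp, e k * p k u ≤ (n:ℝ)*ε := by
        calc ∑ k ∈ Sp, e k * p k u ≤ ∑ _k ∈ Sp, ε := by
              apply Finset.sum_le_sum
              intro k hk
              calc e k * p k u ≤ 1 * p k u :=
                    mul_le_mul_of_nonneg_right (he_le1 k hk) (hp0 k u)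
                _ = p k u := one_mul _
                _ ≤ ε := hpε k u (hu k hk)
          _ = Sp.card * ε := by rw [Finset.sum_const, nsmul_eq_mul]
          _ ≤ (n:ℝ)*ε := mul_le_mul_of_nonneg_right hSpcard hε0
      have h1 : ∑ k ∈ Sp, e k * x k u ≤ (n:ℝ)*ε + |w u| := by
        have h3 : -(|w u|) ≤ w u := neg_abs_le _
        linarith only [hid, h2, h3]
      have h4 : -∑ k ∈ Sp, e k * x k u ≤ σ u := by
        simp only [hσ_def]
        rw [← Finset.sum_neg_distrib]
        apply Finset.sum_le_sum
        intro k hk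
        have h5 : -(x k u) ≤ Υ k u := by
          have h6 := hxp k u
          have h7 := hp0 k u
          linarith
        have h8 : (zf k * e k) * (-(x k u)) ≤ (zf k * e k) * Υ k u :=
          mul_le_mul_of_nonneg_left h5 (hze0 k hk)
        have h9 : zf k * e k * x k u ≤ e k * x k u := by
          have h10 : 0 ≤ e k * x k u :=
            mul_nonneg (le_of_lt (he_pos k hk)) (hx0 k u)
          nlinarith only [hzf1 k, hzf0 k, h10]
        nlinarith only [h8, h9]
      linarith only [h1, h4]
    rw [abs_le]
    constructor
    · linarith only [hlow, abs_nonneg (w u), hnε0]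
    · linarith only [hup, abs_nonneg (w u), hnε0]
  -- positive coordinate bound at q
  have hσ_q : σ (emb q) ≤ (n:ℝ)*ε := by
    simp only [hσ_def]
    calc ∑ k ∈ Sp, (zf k * e k) * Υ k (emb q) ≤ ∑ _k ∈ Sp, ε := by
          apply Finset.sum_le_sum
          intro k hk
          by_cases hkq : k = q
          · subst hkq
            rw [hzfq]
            simpa using hε0
          · calc (zf k * e k) * Υ k (emb q) ≤ (zf k * e k) * ε :=
                  mul_le_mul_of_nonneg_left (hoff k (emb q) (hembne k q hkq))
                    (hze0 k hk)
              _ ≤ 1 * ε := mul_le_mul_of_nonneg_right (hze1 k hk) hε0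
              _ = ε := one_mul ε
      _ = Sp.card * ε := by rw [Finset.sum_const, nsmul_eq_mul]
      _ ≤ (n:ℝ)*ε := mul_le_mul_of_nonneg_right hSpcard hε0
  -- spike lower bound at j₀
  have hσ_j₀ : wf q j₀ - (|w (emb j₀)| + (n:ℝ)*ε) ≤ σ (emb j₀) := by
    have hdecomp : σ (emb j₀) = D j₀
        + ∑ k ∈ Sp.erase j₀, (zf k * e k) * Υ k (emb j₀) := by
      have h := Finset.sum_erase_add Sp (fun k => (zf k * e k) * Υ k (emb j₀)) hj₀Sp
      simp only [hσ_def] at h ⊢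
      rw [← h, hzfj₀, he_j₀]
      simp only [hD_def]
      rw [he_j₀]
      ring
    have hsum1 : -(∑ k ∈ Sp.erase j₀, zf k * wf k j₀)
        ≤ ∑ k ∈ Sp.erase j₀, (zf k * e k) * Υ k (emb j₀) := by
      rw [← Finset.sum_neg_distrib]
      apply Finset.sum_le_sum
      intro k hk
      have hkSp := Finset.mem_of_mem_erase hk
      have h1 : -(x k (emb j₀)) ≤ Υ k (emb j₀) := by
        have h2 := hxp k (emb j₀)
        have h3 := hp0 k (emb j₀)
        linarith
      calc -(zf k * wf k j₀) = (zf k * e k) * (-(x k (emb j₀))) := by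
            simp only [hwf_def]; ring
        _ ≤ (zf k * e k) * Υ k (emb j₀) :=
            mul_le_mul_of_nonneg_left h1 (hze0 k hkSp)
    have hsum2 : ∑ k ∈ Sp.erase j₀, zf k * wf k j₀
        ≤ (∑ k ∈ Sp.erase j₀, wf k j₀) - wf q j₀ := by
      have h := Finset.sum_erase_add (Sp.erase j₀) (fun k => zf k * wf k j₀) hqmem
      have h2 : zf q * wf q j₀ = 0 := by rw [hzfq]; ring
      have h3 : ∑ k ∈ (Sp.erase j₀).erase q, zf k * wf k j₀
          ≤ ∑ k ∈ (Sp.erase j₀).erase q, wf k j₀ := by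
        apply Finset.sum_le_sum
        intro k hk
        have hkSp : k ∈ Sp :=
          Finset.mem_of_mem_erase (Finset.mem_of_mem_erase hk)
        calc zf k * wf k j₀ ≤ 1 * wf k j₀ :=
              mul_le_mul_of_nonneg_right (hzf1 k) (hwf0 k j₀ hkSp)
          _ = wf k j₀ := one_mul _
      have h4 := Finset.sum_erase_add (Sp.erase j₀) (fun k => wf k j₀) hqmem
      linarith only [h, h3, h4, h2]
    have hub := hcol_ub j₀ hj₀Sp
    linarith only [hdecomp, hsum1, hsum2, hub]
    -- Step 6: quantitative bounds and the final contradiction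
  have hν : (0:ℝ) < (n:ℝ)-1 := by linarith
  set S0 : ℝ := (β - (U:ℝ)*ε - (t₁ + (n:ℝ)*ε))/((n:ℝ)-1) - (t₁ + (n:ℝ)*ε) with hS0_def
  -- mass bound for the diagonal of row j₀
  have hDj₀β : β - (U:ℝ)*ε ≤ D j₀ := by
    have hmass := mass_lemma A hA0 hcol hrow (Υ j₀) (hnull j₀)
    rw [← ha_def, ← hβ_def, hnorm j₀, mul_one] at hmass
    have hsplitsum := Finset.sum_erase_add Finset.univ
      (fun u => max (Υ j₀ u) 0) (Finset.mem_univ (emb j₀))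
    have h1 : ∑ u ∈ Finset.univ.erase (emb j₀), max (Υ j₀ u) 0 ≤ (U:ℝ)*ε := by
      calc ∑ u ∈ Finset.univ.erase (emb j₀), max (Υ j₀ u) 0
          ≤ ∑ _u ∈ Finset.univ.erase (emb j₀), ε := by
            apply Finset.sum_le_sum
            intro u hu
            have hne : (u:ℕ) ≠ ((j₀ : Fin n):ℕ) := by
              have h2 : u ≠ emb j₀ := (Finset.mem_erase.mp hu).1
              intro h
              apply h2
              apply Fin.ext
              rw [h, hembval]
            exact max_le (hoff j₀ u hne) hε0
        _ = (Finset.univ.erase (emb j₀)).card * ε := by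
            rw [Finset.sum_const, nsmul_eq_mul]
        _ ≤ (U:ℝ)*ε := by
            apply mul_le_mul_of_nonneg_right _ hε0
            have h3 : (Finset.univ.erase (emb j₀)).card ≤ U := by
              calc (Finset.univ.erase (emb j₀)).card
                  ≤ (Finset.univ : Finset (Fin U)).card :=
                    Finset.card_le_card (Finset.erase_subset _ _)
                _ = U := by simp
            exact_mod_cast h3
    have h2 : max (Υ j₀ (emb j₀)) 0 = Υ j₀ (emb j₀) :=
      max_eq_left (le_trans (le_of_lt ha) (hdiag' j₀))
    have h3 : D j₀ = Υ j₀ (emb j₀) := by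
      simp only [hD_def]; rw [he_j₀]; ring
    rw [h2] at hsplitsum
    linarith only [hmass, hsplitsum, h1, h3.ge, h3.le]
  have hσj₀S0 : S0 ≤ σ (emb j₀) := by
    have hwfq : (D j₀ - (|w (emb j₀)| + (n:ℝ)*ε))/((n:ℝ)-1) ≤ wf q j₀ := by
      rw [div_le_iff₀ hν]
      linarith only [hq_big]
    have hw1' := hwu (emb j₀)
    have hmono : (β - (U:ℝ)*ε - (t₁ + (n:ℝ)*ε))/((n:ℝ)-1)
        ≤ (D j₀ - (|w (emb j₀)| + (n:ℝ)*ε))/((n:ℝ)-1) := by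
      have h5 : β - (U:ℝ)*ε - (t₁ + (n:ℝ)*ε)
          ≤ D j₀ - (|w (emb j₀)| + (n:ℝ)*ε) := by
        linarith only [hDj₀β, hw1']
      rw [div_eq_mul_inv, div_eq_mul_inv]
      exact mul_le_mul_of_nonneg_right h5 (inv_nonneg.mpr (le_of_lt hν))
    simp only [hS0_def]
    linarith only [hσ_j₀, hwfq, hmono, hw1']
  -- numeric: S0 is not too small
  have ht₁pos : 0 < t₁ := by
    simp only [ht₁_def]
    have : 0 < ((U:ℝ)*((n:ℝ)*ε) + εs)/β := by positivity
    linarith only [hεs0, this]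
  have hT : t₁ ≤ a^2 := by
    have e1 : εs*β ≤ a^3*(1/2) :=
      mul_le_mul hεsa3 hβhalf (le_of_lt hβpos) (by positivity)
    have e2 : εs*a ≤ a^3 := by nlinarith only [hεsa3, ha, ha4, hεs0]
    have h1 : t₁*β ≤ a^2*β := by
      rw [ht₁β]
      nlinarith only [e1, e2, hεsa3, hβ2a, ha, sq_nonneg a]
    exact le_of_mul_le_mul_right h1 hβpos
  have hkey5 : (U:ℝ)*ε + (n:ℝ)*(t₁ + (n:ℝ)*ε) ≤ β/2 := by
    have f1 : (n:ℝ)*t₁ ≤ β*a := by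
      have g1 : (n:ℝ)*t₁ ≤ (U:ℝ)*a^2 := by
        calc (n:ℝ)*t₁ ≤ (n:ℝ)*a^2 :=
              mul_le_mul_of_nonneg_left hT (le_of_lt hn0)
          _ ≤ (U:ℝ)*a^2 := mul_le_mul_of_nonneg_right hnU' (sq_nonneg a)
      have g2 : (U:ℝ)*a^2 = β*a := by rw [hβ_def]; ring
      linarith only [g1, g2.le, g2.ge]
    have f2 : β*a ≤ β*(1/4) := mul_le_mul_of_nonneg_left ha4 (le_of_lt hβpos)
    have f3 : (n:ℝ)*((n:ℝ)*ε) ≤ β/16 := by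
      have g3 : (n:ℝ)*((n:ℝ)*ε) ≤ (U:ℝ)*(εs*a/128) := by
        calc (n:ℝ)*((n:ℝ)*ε) ≤ (n:ℝ)*(εs*a/128) :=
              mul_le_mul_of_nonneg_left hnε_small (le_of_lt hn0)
          _ ≤ (U:ℝ)*(εs*a/128) := by
              apply mul_le_mul_of_nonneg_right hnU'
              positivity
      have g4 : (U:ℝ)*(εs*a/128) ≤ β/16 := by
        have g5 : (U:ℝ)*εs*a ≤ (U:ℝ)*a^3*a := by
          have g5a : (U:ℝ)*εs ≤ (U:ℝ)*a^3 :=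
            mul_le_mul_of_nonneg_left hεsa3 (le_of_lt hU0)
          exact mul_le_mul_of_nonneg_right g5a (le_of_lt ha)
        have g6 : (U:ℝ)*a^3*a = β*(a^3) := by rw [hβ_def]; ring
        have g7 : β*(a^3) ≤ β*(1/8) := by
          apply mul_le_mul_of_nonneg_left _ (le_of_lt hβpos)
          have q1 : a^2 ≤ 1/16 := by nlinarith only [ha, ha4]
          nlinarith only [q1, ha, ha4]
        nlinarith only [g5, g6.le, g6.ge, g7, hβpos]
      linarith only [g3, g4]
    have f4 : (U:ℝ)*ε ≤ β/16 := by
      have g8 : εs*a ≤ a^3 := by nlinarith only [hεsa3, ha, ha4, hεs0]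
      have g9 : a^3 ≤ a*(1/16) := by
        have q1 : a^2 ≤ 1/16 := by nlinarith only [ha, ha4]
        nlinarith only [q1, ha]
      have g10 : a ≤ β/2 := by linarith only [hβ2a]
      linarith only [hUε_small, g8, g9, g10, ha]
    linarith only [f1, f2, f3, f4, hβpos]
  have hS0lb : β/(2*((n:ℝ)-1)) ≤ S0 := by
    have hνne : ((n:ℝ)-1) ≠ 0 := ne_of_gt hν
    have hS0n : S0 * ((n:ℝ)-1) = β - (U:ℝ)*ε - (n:ℝ)*(t₁ + (n:ℝ)*ε) := by
      simp only [hS0_def]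
      field_simp
      ring
    have h7 : β/(2*((n:ℝ)-1)) * ((n:ℝ)-1) = β/2 := by
      field_simp
    have h6 : β/(2*((n:ℝ)-1)) * ((n:ℝ)-1) ≤ S0 * ((n:ℝ)-1) := by
      rw [hS0n, h7]
      linarith only [hkey5]
    exact le_of_mul_le_mul_right h6 hν
  have hS0pos : 0 < S0 := lt_of_lt_of_le (by positivity) hS0lb
  -- the junk budget
  set Jb : ℝ := t₁ + 2*((U:ℝ)*((n:ℝ)*ε)) with hJb_def
  set K : Finset (Fin U) := (Finset.univ.erase (emb j₀)).erase (emb q) with hK_def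
  have hptK : ∀ u ∈ K, |σ u| ≤ |w u| + 2*((n:ℝ)*ε) := by
    intro u huK
    have hu1 : u ≠ emb q := by
      have := Finset.mem_erase.mp (hK_def ▸ huK)
      exact this.1
    have hu2 : u ≠ emb j₀ := by
      have h1 := Finset.mem_erase.mp (hK_def ▸ huK)
      exact (Finset.mem_erase.mp h1.2).1
    by_cases hex : ∃ m ∈ Sp, (u:ℕ) = (m:ℕ)
    · obtain ⟨m, hm, hum⟩ := hex
      have hu_eq : u = emb m := by
        apply Fin.ext
        rw [hum, hembval]
      have hmj : m ≠ j₀ := by rintro rfl; exact hu2 hu_eq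
      have hmq : m ≠ q := by rintro rfl; exact hu1 hu_eq
      rw [hu_eq]
      exact hσ_b1 m hm hmj hmq
    · push_neg at hex
      exact hσ_b2 u hex
  have hJbound : ∑ u ∈ K, |σ u| ≤ Jb := by
    have hKsub : ∑ u ∈ K, |w u| ≤ ∑ u, |w u| :=
      Finset.sum_le_sum_of_subset_of_nonneg (Finset.subset_univ K)
        (fun u _ _ => abs_nonneg _)
    have hKcard : (K.card : ℝ) ≤ (U:ℝ) := by
      have h1 : K.card ≤ U := by
        calc K.card ≤ (Finset.univ : Finset (Fin U)).card :=
              Finset.card_le_card (Finset.subset_univ K)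
          _ = U := by simp
      exact_mod_cast h1
    have h9 : (K.card : ℝ) * (2*((n:ℝ)*ε)) ≤ (U:ℝ)*(2*((n:ℝ)*ε)) :=
      mul_le_mul_of_nonneg_right hKcard (by positivity)
    calc ∑ u ∈ K, |σ u| ≤ ∑ u ∈ K, (|w u| + 2*((n:ℝ)*ε)) := Finset.sum_le_sum hptK
      _ = (∑ u ∈ K, |w u|) + (K.card : ℝ) * (2*((n:ℝ)*ε)) := by
          rw [Finset.sum_add_distrib, Finset.sum_const, nsmul_eq_mul]
      _ ≤ t₁ + (U:ℝ)*(2*((n:ℝ)*ε)) := by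
          linarith only [hKsub, hw1, h9]
      _ = Jb := by rw [hJb_def]; ring
  -- the key numeric bound: Jb + nε ≤ ε'·(β/(2(n-1))) ≤ ε'·S0
  have hJbnum : Jb + (n:ℝ)*ε ≤ ε' * (β/(2*((n:ℝ)-1))) := by
    have hX : (Jb + (n:ℝ)*ε)*β
        ≤ εs*β + εs*a/64 + εs + εs*a/32*β + εs*a/128*β := by
      have g1 : (2*((U:ℝ)*((n:ℝ)*ε)))*β = εs*a/32*β := by rw [hUnε]; ring
      have g2 : ((n:ℝ)*ε)*β ≤ εs*a/128*β :=
        mul_le_mul_of_nonneg_right hnε_small (le_of_lt hβpos)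
      have g3 : (Jb + (n:ℝ)*ε)*β = t₁*β + (2*((U:ℝ)*((n:ℝ)*ε)))*β + ((n:ℝ)*ε)*β := by
        rw [hJb_def]; ring
      rw [g3, ht₁β, g1]
      linarith only [g2]
    have hU4 : (4:ℝ) ≤ (U:ℝ)^2 := by nlinarith only [hU2]
    have k1 : εs*β*((n:ℝ)-1) ≤ εs*(1/2)*((n:ℝ)-1) := by
      apply mul_le_mul_of_nonneg_right _ (le_of_lt hν)
      exact mul_le_mul_of_nonneg_left hβhalf (le_of_lt hεs0)
    have k2 : εs*a*((n:ℝ)-1) ≤ εs*(1/4)*((n:ℝ)-1) := by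
      apply mul_le_mul_of_nonneg_right _ (le_of_lt hν)
      exact mul_le_mul_of_nonneg_left ha4 (le_of_lt hεs0)
    have k3 : εs*a*β*((n:ℝ)-1) ≤ εs*(1/8)*((n:ℝ)-1) := by
      apply mul_le_mul_of_nonneg_right _ (le_of_lt hν)
      have r1 : a*β ≤ 1/8 := by nlinarith only [ha4, hβhalf, ha, hβpos]
      nlinarith only [r1, hεs0]
    have m1 : 0 ≤ ((U:ℝ)^2 - 4)*(((n:ℝ)-1)*εs) :=
      mul_nonneg (by linarith only [hU4]) (mul_nonneg (le_of_lt hν) (le_of_lt hεs0))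
    have m2 : 0 ≤ εs*a*((U:ℝ)^2) := by positivity
    have hscalar : (εs*β + εs*a/64 + εs + εs*a/32*β + εs*a/128*β) * (2*((n:ℝ)-1))
        ≤ εs*(a + (n:ℝ) - 1) * ((U:ℝ)^2) := by
      nlinarith only [k1, k2, k3, m1, m2, hεs0, hν]
    have hchain : (Jb + (n:ℝ)*ε)*(2*((n:ℝ)-1))*β ≤ (ε'*β)*β := by
      have c2 : ((Jb + (n:ℝ)*ε)*β)*(2*((n:ℝ)-1))
          ≤ (εs*β + εs*a/64 + εs + εs*a/32*β + εs*a/128*β) * (2*((n:ℝ)-1)) :=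
        mul_le_mul_of_nonneg_right hX (by linarith only [hν])
      have c3 : εs*(a + (n:ℝ) - 1) * ((U:ℝ)^2) ≤ (ε'*(a*a))*((U:ℝ)^2) :=
        mul_le_mul_of_nonneg_right hε'a (by positivity)
      have c4 : (ε'*(a*a))*((U:ℝ)^2) = (ε'*β)*β := by rw [hβ_def]; ring
      have c5 : (Jb + (n:ℝ)*ε)*(2*((n:ℝ)-1))*β = ((Jb + (n:ℝ)*ε)*β)*(2*((n:ℝ)-1)) := by
        ring
      rw [c5]
      calc ((Jb + (n:ℝ)*ε)*β)*(2*((n:ℝ)-1))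
          ≤ (εs*β + εs*a/64 + εs + εs*a/32*β + εs*a/128*β) * (2*((n:ℝ)-1)) := c2
        _ ≤ εs*(a + (n:ℝ) - 1) * ((U:ℝ)^2) := hscalar
        _ ≤ (ε'*(a*a))*((U:ℝ)^2) := c3
        _ = (ε'*β)*β := c4
    have hfinal : (Jb + (n:ℝ)*ε)*(2*((n:ℝ)-1)) ≤ ε'*β :=
      le_of_mul_le_mul_right hchain hβpos
    rw [show ε' * (β/(2*((n:ℝ)-1))) = (ε'*β)/(2*((n:ℝ)-1)) by ring]
    rw [le_div_iff₀ (by linarith only [hν] : (0:ℝ) < 2*((n:ℝ)-1))]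
    exact hfinal
  have hJbS0 : Jb + (n:ℝ)*ε ≤ ε' * S0 := by
    have h1 : ε' * (β/(2*((n:ℝ)-1))) ≤ ε' * S0 :=
      mul_le_mul_of_nonneg_left hS0lb (le_of_lt hε'pos)
    exact le_trans hJbnum h1
  -- assemble the double polarized vector
  set Nn : ℝ := ∑ u, |σ u| with hNn_def
  have hNnS0 : S0 ≤ Nn := by
    calc S0 ≤ σ (emb j₀) := hσj₀S0
      _ ≤ |σ (emb j₀)| := le_abs_self _
      _ ≤ Nn := by
          rw [hNn_def]
          exact Finset.single_le_sum (f := fun u => |σ u|)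
            (fun u _ => abs_nonneg _) (Finset.mem_univ _)
  have hNnpos : 0 < Nn := lt_of_lt_of_le hS0pos hNnS0
  have hmassp := mass_lemma A hA0 hcol hrow σ hσnull
  rw [← ha_def, ← hβ_def, ← hNn_def] at hmassp
  have hσnull' : ∀ l, ∑ u, (-(σ u)) * A u l = 0 := by
    intro l
    have h1 := hσnull l
    have h2 : ∑ u, (-(σ u)) * A u l = -∑ u, σ u * A u l := by
      rw [← Finset.sum_neg_distrib]
      apply Finset.sum_congr rfl
      intro u _
      ring
    rw [h2, h1]
    ring
  have hmassn := mass_lemma A hA0 hcol hrow (fun u => -(σ u)) hσnull'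
  rw [← ha_def, ← hβ_def] at hmassn
  simp only [abs_neg] at hmassn
  rw [← hNn_def] at hmassn
  have hqj₀emb : emb j₀ ≠ emb q := by
    intro h
    apply hqj₀
    apply Fin.ext
    have h2 : ((emb j₀ : Fin U):ℕ) = ((emb q : Fin U):ℕ) := congrArg Fin.val h
    rw [hembval, hembval] at h2
    exact h2.symm
  have hqmem2 : emb q ∈ Finset.univ.erase (emb j₀) :=
    Finset.mem_erase.mpr ⟨fun h => hqj₀emb h.symm, Finset.mem_univ _⟩
  -- decomposition of the positive mass
  have hdecompP : β*Nn ≤ max (σ (emb j₀)) 0 + max (σ (emb q)) 0 + ∑ u ∈ K, |σ u| := by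
    have h1 := Finset.sum_erase_add Finset.univ
      (fun u => max (σ u) 0) (Finset.mem_univ (emb j₀))
    have h2 := Finset.sum_erase_add (Finset.univ.erase (emb j₀))
      (fun u => max (σ u) 0) hqmem2
    have h3 : ∑ u ∈ K, max (σ u) 0 ≤ ∑ u ∈ K, |σ u| :=
      Finset.sum_le_sum (fun u _ => max_le (le_abs_self _) (abs_nonneg _))
    have h4 : ∑ u ∈ (Finset.univ.erase (emb j₀)).erase (emb q), max (σ u) 0
        = ∑ u ∈ K, max (σ u) 0 := by rw [hK_def]
    rw [h4] at h2
    linarith only [hmassp, h1, h2, h3]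
  have hdecompN : β*Nn ≤ max (-(σ (emb j₀))) 0 + max (-(σ (emb q))) 0
      + ∑ u ∈ K, |σ u| := by
    have h1 := Finset.sum_erase_add Finset.univ
      (fun u => max (-(σ u)) 0) (Finset.mem_univ (emb j₀))
    have h2 := Finset.sum_erase_add (Finset.univ.erase (emb j₀))
      (fun u => max (-(σ u)) 0) hqmem2
    have h3 : ∑ u ∈ K, max (-(σ u)) 0 ≤ ∑ u ∈ K, |σ u| :=
      Finset.sum_le_sum (fun u _ => max_le (neg_le_abs _) (abs_nonneg _))
    have h4 : ∑ u ∈ (Finset.univ.erase (emb j₀)).erase (emb q), max (-(σ u)) 0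
        = ∑ u ∈ K, max (-(σ u)) 0 := by rw [hK_def]
    rw [h4] at h2
    linarith only [hmassn, h1, h2, h3]
  have hmaxq : max (σ (emb q)) 0 ≤ (n:ℝ)*ε := max_le hσ_q hnε0
  have hmaxj₀ : max (σ (emb j₀)) 0 = σ (emb j₀) :=
    max_eq_left (le_trans (le_of_lt hS0pos) hσj₀S0)
  have hσj₀_big : β*Nn - (Jb + (n:ℝ)*ε) ≤ σ (emb j₀) := by
    linarith only [hdecompP, hmaxq, hJbound, hmaxj₀.le, hmaxj₀.ge]
  have hmaxj₀n : max (-(σ (emb j₀))) 0 = 0 := by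
    apply max_eq_right
    linarith only [hσj₀S0, hS0pos]
  have hσq_small : σ (emb q) ≤ -(β*Nn - Jb) := by
    have h4 : β*Nn - Jb ≤ max (-(σ (emb q))) 0 := by
      linarith only [hdecompN, hmaxj₀n.le, hmaxj₀n.ge, hJbound]
    have h5 : 0 < β*Nn - Jb := by
      have m1 : ε'*S0 ≤ ε'*Nn := mul_le_mul_of_nonneg_left hNnS0 (le_of_lt hε'pos)
      have m2 : ε'*Nn ≤ a*Nn := mul_le_mul_of_nonneg_right (le_of_lt hε'ub) (le_of_lt hNnpos)
      have m3 : 2*(a*Nn) ≤ β*Nn := by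
        nlinarith only [hβ2a, hNnpos]
      linarith only [hJbS0, m1, m2, m3, hnε0, mul_pos ha hNnpos]
    rcases max_cases (-(σ (emb q))) 0 with ⟨hm, -⟩ | ⟨hm, -⟩
    · rw [hm] at h4; linarith only [h4]
    · rw [hm] at h4; linarith only [h4, h5]
  -- contradiction with hnodbl
  apply hnodbl
  refine ⟨fun u => σ u / Nn, emb j₀, emb q, hqj₀emb, ?_, ?_, ?_, ?_, ?_⟩
  · calc ∑ u, |σ u / Nn| = ∑ u, |σ u| / Nn := by
          apply Finset.sum_congr rfl
          intro u _
          rw [abs_div, abs_of_pos hNnpos]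
      _ = Nn / Nn := by rw [← Finset.sum_div, hNn_def]
      _ = 1 := div_self (ne_of_gt hNnpos)
  · intro l
    calc ∑ u, σ u / Nn * A u l = (∑ u, σ u * A u l)/Nn := by
          rw [Finset.sum_div]
          apply Finset.sum_congr rfl
          intro u _
          ring
      _ = 0 := by rw [hσnull l]; simp
  · rw [le_div_iff₀ hNnpos]
    have m1 : ε'*S0 ≤ ε'*Nn := mul_le_mul_of_nonneg_left hNnS0 (le_of_lt hε'pos)
    have m2 : a*Nn ≤ (β-ε')*Nn := by
      apply mul_le_mul_of_nonneg_right _ (le_of_lt hNnpos)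
      linarith only [hβ2a, hε'ub]
    have m3 : (β-ε')*Nn = β*Nn - ε'*Nn := by ring
    linarith only [hσj₀_big, hJbS0, m1, m2, m3.le, m3.ge]
  · rw [div_le_iff₀ hNnpos]
    have m1 : ε'*S0 ≤ ε'*Nn := mul_le_mul_of_nonneg_left hNnS0 (le_of_lt hε'pos)
    have m2 : a*Nn ≤ (β-ε')*Nn := by
      apply mul_le_mul_of_nonneg_right _ (le_of_lt hNnpos)
      linarith only [hβ2a, hε'ub]
    have m3 : (β-ε')*Nn = β*Nn - ε'*Nn := by ring
    linarith only [hσq_small, hJbS0, m1, m2, m3.le, m3.ge, hnε0]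
  · intro u hu1 hu2
    have huK : u ∈ K := by
      rw [hK_def]
      exact Finset.mem_erase.mpr ⟨hu2, Finset.mem_erase.mpr ⟨hu1, Finset.mem_univ _⟩⟩
    have h1 : |σ u| ≤ ∑ u' ∈ K, |σ u'| :=
      Finset.single_le_sum (f := fun u' => |σ u'|) (fun u' _ => abs_nonneg _) huK
    rw [abs_div, abs_of_pos hNnpos, div_le_iff₀ hNnpos]
    have m1 : ε'*S0 ≤ ε'*Nn := mul_le_mul_of_nonneg_left hNnS0 (le_of_lt hε'pos)
    have h2 : (n:ℝ)*ε ≥ 0 := hnε0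
    nlinarith only [h1, hJbound, hJbS0, m1, h2]
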